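/- Fix $n\ge 1$, $m\ge 1$, and $\alpha\in[0,1]$. For each $\theta$ in the grid $\Theta_m=\{0,\frac{1}{m},\ldots,1\}$ let $R(\theta)\in[0,1]$ and let $\hat{R}(\theta)$ be the average of $n$ i.i.d. $[0,1]$-valued random variables each with mean $R(\theta)$. Let $\hat\theta=\inf\{\theta\in\Theta_m:\hat{R}(\theta)\le\alpha\}$, where $R(1)=\hat{R}(1)=0$ so $\hat\theta$ is well-defined. Then for every $\epsilon\ge 0$, $\mathbb{P}(R(\hat\theta)>\alpha+\epsilon)\le(m+1)\exp(-2n\epsilon^2)$, and hence $\mathbb{E}[R(\hat\theta)]\le\alpha+\epsilon+(m+1)\exp(-2n\epsilon^2)$. -/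

import Mathlib

open MeasureTheory ProbabilityTheory

section GridRiskAux
open Real


lemma keyD (p : ℝ) (hp0 : 0 ≤ p) (hp1 : p ≤ 1) (s : ℝ) : 0 < 1 - p + p * exp s := by
  nlinarith [exp_pos s, mul_nonneg hp0 (exp_pos s).le]

lemma key_ineq (p : ℝ) (hp0 : 0 ≤ p) (hp1 : p ≤ 1) (t : ℝ) :
    1 - p + p * exp t ≤ exp (p * t + t ^ 2 / 8) := by
  set D : ℝ → ℝ := fun s => 1 - p + p * exp s with hDdef
  have hD : ∀ s, 0 < D s := keyD p hp0 hp1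
  set f : ℝ → ℝ := fun s => p * s + s ^ 2 / 8 - log (D s) with hfdef
  set g : ℝ → ℝ := fun s => p + s / 4 - p * exp s / D s with hgdef
  have hDd : ∀ s, HasDerivAt D (p * exp s) s := fun s => by
    exact (((hasDerivAt_exp s).const_mul p).const_add (1 - p))
  have hfd : ∀ s, HasDerivAt f (g s) s := by
    intro s
    have h1 : HasDerivAt (fun s : ℝ => p * s + s ^ 2 / 8) (p + s * 2 / 8) s := by
      have := ((hasDerivAt_pow 2 s).div_const 8).const_add 0
      refine HasDerivAt.congr_deriv (((hasDerivAt_id s).const_mul p).add ((hasDerivAt_pow 2 s).div_const 8)) ?_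
      norm_num
      ring
    have h2 : HasDerivAt (fun s => log (D s)) (p * exp s / D s) s :=
      (hDd s).log (hD s).ne'
    have := h1.sub h2
    refine this.congr_deriv ?_
    simp only [hgdef]
    ring
  have hgd : ∀ s, HasDerivAt g (1 / 4 - p * (1 - p) * exp s / (D s) ^ 2) s := by
    intro s
    have h1 : HasDerivAt (fun s : ℝ => p + s / 4) (1 / 4) s := by
      simpa using ((hasDerivAt_id s).div_const 4).const_add p
    have h2 : HasDerivAt (fun s => p * exp s / D s)
        ((p * exp s * D s - p * exp s * (p * exp s)) / (D s) ^ 2) s :=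
      ((hasDerivAt_exp s).const_mul p).div (hDd s) (hD s).ne'
    have := h1.sub h2
    refine this.congr_deriv ?_
    have hds : D s - p * exp s = 1 - p := by simp [hDdef]
    rw [show p * exp s * D s - p * exp s * (p * exp s) = p * (1 - p) * exp s by rw [← hds]; ring]
  have hg'0 : ∀ s, 0 ≤ 1 / 4 - p * (1 - p) * exp s / (D s) ^ 2 := by
    intro s
    rw [sub_nonneg, div_le_iff₀ (pow_pos (hD s) 2)]
    have h := hD s
    have hDeq : D s = 1 - p + p * exp s := rfl
    nlinarith [sq_nonneg ((1 - p) - p * exp s), exp_pos s]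
  have hgmono : Monotone g :=
    monotone_of_deriv_nonneg (fun s => (hgd s).differentiableAt)
      (fun s => by rw [(hgd s).deriv]; exact hg'0 s)
  have hg0 : g 0 = 0 := by
    simp [hgdef, hDdef, Real.exp_zero]
  have hf0 : f 0 = 0 := by
    simp [hfdef, hDdef, Real.exp_zero]
  have hfc : Continuous f := by
    have : Differentiable ℝ f := fun s => (hfd s).differentiableAt
    exact this.continuous
  have hfnn : ∀ s, 0 ≤ f s := by
    intro s
    rcases le_total 0 s with hs | hs
    · have hmono : MonotoneOn f (Set.Ici 0) := by
        refine monotoneOn_of_deriv_nonneg (convex_Ici 0) hfc.continuousOn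
          (fun x hx => (hfd x).differentiableAt.differentiableWithinAt) (fun x hx => ?_)
        rw [(hfd x).deriv]
        have : (0:ℝ) ≤ x := le_of_lt (by simpa using hx)
        simpa [hg0] using hgmono this
      have := hmono (Set.self_mem_Ici) (Set.mem_Ici.2 hs) hs
      linarith [hf0 ▸ this]
    · have hanti : AntitoneOn f (Set.Iic 0) := by
        refine antitoneOn_of_deriv_nonpos (convex_Iic 0) hfc.continuousOn
          (fun x hx => (hfd x).differentiableAt.differentiableWithinAt) (fun x hx => ?_)
        rw [(hfd x).deriv]
        have : x ≤ (0:ℝ) := le_of_lt (by simpa using hx)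
        simpa [hg0] using hgmono this
      have := hanti (Set.mem_Iic.2 hs) (Set.self_mem_Iic) hs
      linarith [hf0 ▸ this]
  have hlog : log (D t) ≤ p * t + t ^ 2 / 8 := by
    have := hfnn t
    simp only [hfdef] at this
    linarith
  calc D t = exp (log (D t)) := (exp_log (hD t)).symm
    _ ≤ exp (p * t + t ^ 2 / 8) := exp_le_exp.2 hlog

lemma exp_mul_integrable {Ω : Type*} [MeasurableSpace Ω] (μ : Measure Ω)
    [IsProbabilityMeasure μ] {Y : Ω → ℝ} (hmeas : Measurable Y)
    (hbdd : ∀ ω, Y ω ∈ Set.Icc (0:ℝ) 1) (t : ℝ) :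
    Integrable (fun ω => exp (t * Y ω)) μ := by
  refine Integrable.mono' (integrable_const (exp |t|))
    ((hmeas.const_mul t).exp.aestronglyMeasurable) (ae_of_all _ fun ω => ?_)
  rw [Real.norm_eq_abs, abs_of_pos (exp_pos _)]
  apply exp_le_exp.2
  rcases hbdd ω with ⟨h0, h1⟩
  rcases le_total 0 t with ht | ht
  · calc t * Y ω ≤ t * 1 := by nlinarith
      _ ≤ |t| := by rw [mul_one]; exact le_abs_self t
  · calc t * Y ω ≤ t * 0 := by nlinarith
      _ ≤ |t| := by rw [mul_zero]; positivity

lemma bdd_integrable {Ω : Type*} [MeasurableSpace Ω] (μ : Measure Ω)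
    [IsProbabilityMeasure μ] {Y : Ω → ℝ} (hmeas : Measurable Y)
    (hbdd : ∀ ω, Y ω ∈ Set.Icc (0:ℝ) 1) : Integrable Y μ := by
  refine Integrable.mono' (integrable_const 1) hmeas.aestronglyMeasurable
    (ae_of_all _ fun ω => ?_)
  rcases hbdd ω with ⟨h0, h1⟩
  rw [Real.norm_eq_abs, abs_of_nonneg h0]; exact h1

lemma mgf_le_hoeffding {Ω : Type*} [MeasurableSpace Ω] (μ : Measure Ω)
    [IsProbabilityMeasure μ] {Y : Ω → ℝ} (hmeas : Measurable Y)
    (hbdd : ∀ ω, Y ω ∈ Set.Icc (0:ℝ) 1) (t : ℝ) :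
    mgf Y μ t ≤ exp (t * (∫ ω, Y ω ∂μ) + t ^ 2 / 8) := by
  set r := ∫ ω, Y ω ∂μ with hr
  have hYint : Integrable Y μ := bdd_integrable μ hmeas hbdd
  have hr0 : 0 ≤ r := integral_nonneg fun ω => (hbdd ω).1
  have hr1 : r ≤ 1 := by
    calc r ≤ ∫ _ω, (1:ℝ) ∂μ := integral_mono hYint (integrable_const 1) fun ω => (hbdd ω).2
      _ = 1 := by simp
  have hpt : ∀ ω, exp (t * Y ω) ≤ 1 - Y ω + Y ω * exp t := by
    intro ω
    rcases hbdd ω with ⟨h0, h1⟩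
    have := convexOn_exp.2 (Set.mem_univ (0:ℝ)) (Set.mem_univ t)
      (by linarith : (0:ℝ) ≤ 1 - Y ω) h0 (by ring)
    simpa [smul_eq_mul, mul_comm] using this
  have hint : mgf Y μ t ≤ 1 - r + r * exp t := by
    rw [mgf]
    calc ∫ ω, exp (t * Y ω) ∂μ ≤ ∫ ω, (1 - Y ω + Y ω * exp t) ∂μ := by
          refine integral_mono (exp_mul_integrable μ hmeas hbdd t) ?_ hpt
          exact ((integrable_const 1).sub hYint).add (hYint.mul_const _)
      _ = 1 - r + r * exp t := by
          have hfun : (fun ω => 1 - Y ω + Y ω * exp t) =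
              fun ω => 1 + (exp t - 1) * Y ω := by funext ω; ring
          rw [hfun, integral_add (integrable_const 1) (hYint.const_mul _),
            MeasureTheory.integral_const_mul]
          simp only [integral_const, measure_univ, ENNReal.toReal_one, probReal_univ, smul_eq_mul,
            mul_one, ← hr]
          ring
  calc mgf Y μ t ≤ 1 - r + r * exp t := hint
    _ ≤ exp (r * t + t ^ 2 / 8) := key_ineq r hr0 hr1 t
    _ = exp (t * r + t ^ 2 / 8) := by rw [mul_comm r t]

lemma tail_bound {Ω : Type*} [MeasurableSpace Ω] (μ : Measure Ω)
    [IsProbabilityMeasure μ] (n : ℕ) (Y : Fin n → Ω → ℝ)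
    (hmeas : ∀ i, Measurable (Y i)) (hbdd : ∀ i ω, Y i ω ∈ Set.Icc (0:ℝ) 1)
    (hindep : iIndepFun Y μ)
    (r a ε : ℝ) (hmean : ∀ i, (∫ ω, Y i ω ∂μ) = r) (hε : 0 ≤ ε) (hra : a + ε ≤ r) :
    (μ {ω | (∑ i, Y i ω) ≤ n * a}).toReal ≤ exp (-2 * n * ε ^ 2) := by
  set t : ℝ := -4 * ε with ht
  have ht0 : t ≤ 0 := by nlinarith
  have hinti : ∀ i ∈ Finset.univ, Integrable (fun ω => exp (t * Y i ω)) μ :=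
    fun i _ => exp_mul_integrable μ (hmeas i) (hbdd i) t
  have hintS : Integrable (fun ω => exp (t * (∑ i, Y i) ω)) μ :=
    hindep.integrable_exp_mul_sum hmeas hinti
  have hch := measure_le_le_exp_mul_mgf (X := ∑ i, Y i) (n * a) ht0 hintS
  have hset : {ω | (∑ i, Y i) ω ≤ n * a} = {ω | (∑ i, Y i ω) ≤ n * a} := by
    ext ω; simp [Finset.sum_apply]
  rw [hset] at hch
  have hmgf : mgf (∑ i, Y i) μ t ≤ exp (n * (t * r + t ^ 2 / 8)) := by
    rw [hindep.mgf_sum hmeas]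
    calc ∏ i : Fin n, mgf (Y i) μ t
        ≤ ∏ _i : Fin n, exp (t * r + t ^ 2 / 8) := by
          refine Finset.prod_le_prod (fun i _ => mgf_nonneg) (fun i _ => ?_)
          simpa [hmean i] using mgf_le_hoeffding μ (hmeas i) (hbdd i) t
      _ = exp (n * (t * r + t ^ 2 / 8)) := by
          rw [Finset.prod_const, ← Real.exp_nat_mul]; simp
  calc (μ {ω | (∑ i, Y i ω) ≤ n * a}).toReal
      ≤ exp (-t * (n * a)) * mgf (∑ i, Y i) μ t := hch
    _ ≤ exp (-t * (n * a)) * exp (n * (t * r + t ^ 2 / 8)) := by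
        exact mul_le_mul_of_nonneg_left hmgf (exp_pos _).le
    _ = exp (-t * (n * a) + n * (t * r + t ^ 2 / 8)) := (Real.exp_add _ _).symm
    _ ≤ exp (-2 * n * ε ^ 2) := by
        apply exp_le_exp.2
        have hn0 : (0:ℝ) ≤ n := Nat.cast_nonneg n
        have hmul : t * (r - a) ≤ t * ε := by nlinarith
        have h1 : t * ε = -4 * ε ^ 2 := by rw [ht]; ring
        have h2 : t ^ 2 / 8 = 2 * ε ^ 2 := by rw [ht]; ring
        have h3 : t * (r - a) + t ^ 2 / 8 ≤ -2 * ε ^ 2 := by linarith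
        have h4 : (n:ℝ) * (t * (r - a) + t ^ 2 / 8) ≤ (n:ℝ) * (-2 * ε ^ 2) :=
          mul_le_mul_of_nonneg_left h3 hn0
        have heq : -t * ((n:ℝ) * a) + (n:ℝ) * (t * r + t ^ 2 / 8) =
            (n:ℝ) * (t * (r - a) + t ^ 2 / 8) := by ring
        have h5 : (n:ℝ) * (-2 * ε ^ 2) = -2 * (n:ℝ) * ε ^ 2 := by ring
        linarith

end GridRiskAux

/-- **Risk control on a grid via Hoeffding + union bound** (Proposition 2's core bound).
The grid `Θ_m = {0, 1/m, …, 1}` is indexed by `k : Fin (m+1)` (so `θ = k/m`). For each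
grid point, `R̂(θ)` is the average of `n` i.i.d. `[0,1]`-valued random variables with
mean `R(θ)`; `R(1) = R̂(1) = 0`. With `k̂(ω)` the smallest grid index at which
`R̂ ≤ α`, one has `ℙ(R(θ̂) > α + ε) ≤ (m+1) e^{-2nε²}` and hence
`𝔼[R(θ̂)] ≤ α + ε + (m+1) e^{-2nε²}` for every `ε ≥ 0`. -/
theorem grid_risk_control
    {Ω : Type*} [MeasurableSpace Ω] (μ : Measure Ω) [IsProbabilityMeasure μ]
    (n m : ℕ) (hn : 1 ≤ n) (hm : 1 ≤ m)
    (α : ℝ) (hα : α ∈ Set.Icc (0 : ℝ) 1)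
    (R : Fin (m + 1) → ℝ) (hR : ∀ k, R k ∈ Set.Icc (0 : ℝ) 1)
    (X : Fin (m + 1) → Fin n → Ω → ℝ)
    (hXmeas : ∀ k i, Measurable (X k i))
    (hXbdd : ∀ k i, ∀ ω, X k i ω ∈ Set.Icc (0 : ℝ) 1)
    -- for each grid point, the n variables are independent ...
    (hindep : ∀ k, iIndepFun (X k) μ)
    -- ... identically distributed ...
    (hident : ∀ k i i', Measure.map (X k i) μ = Measure.map (X k i') μ)
    -- ... with mean R k
    (hmean : ∀ k i, (∫ ω, X k i ω ∂μ) = R k)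
    -- the empirical risk at each grid point is the average of the n variables
    (Rhat : Fin (m + 1) → Ω → ℝ)
    (hRhat : ∀ k ω, Rhat k ω = (1 / (n : ℝ)) * ∑ i : Fin n, X k i ω)
    -- the safe last grid point: R(1) = R̂(1) = 0
    (hsafeR : R (Fin.last m) = 0)
    (hsafeX : ∀ i ω, X (Fin.last m) i ω = 0)
    -- k̂ is the smallest grid index at which the empirical risk is ≤ α
    (khat : Ω → Fin (m + 1)) (hkhatmeas : Measurable khat)
    (hkhat : ∀ ω, Rhat (khat ω) ω ≤ α ∧ ∀ k, Rhat k ω ≤ α → khat ω ≤ k) :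
    ∀ ε : ℝ, 0 ≤ ε →
      (μ {ω | α + ε < R (khat ω)}).toReal ≤ (m + 1 : ℝ) * Real.exp (-2 * n * ε ^ 2)
      ∧ (∫ ω, R (khat ω) ∂μ) ≤ α + ε + (m + 1 : ℝ) * Real.exp (-2 * n * ε ^ 2) := by
  intro ε hε
  have hnpos : (0:ℝ) < n := by exact_mod_cast hn
  -- the bad set
  set s : Set Ω := {ω | α + ε < R (khat ω)} with hs_def
  have hs_meas : MeasurableSet s := by
    have : s = khat ⁻¹' {k | α + ε < R k} := rfl
    rw [this]
    exact hkhatmeas ((Set.toFinite _).measurableSet)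
  -- the per-grid-point events
  set C : Fin (m + 1) → Set Ω := fun k => {ω | α + ε < R k ∧ Rhat k ω ≤ α} with hC_def
  have hsub : s ⊆ ⋃ k, C k := by
    intro ω hω
    exact Set.mem_iUnion.2 ⟨khat ω, hω, (hkhat ω).1⟩
  have hCk : ∀ k, (μ (C k)).toReal ≤ Real.exp (-2 * n * ε ^ 2) := by
    intro k
    by_cases hk : α + ε < R k
    · have hsub2 : C k ⊆ {ω | (∑ i, X k i ω) ≤ n * α} := by
        intro ω hω
        have h1 : Rhat k ω ≤ α := hω.2
        rw [hRhat] at h1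
        have := (div_le_iff₀ hnpos).1 (by simpa [div_eq_inv_mul, one_div] using h1)
        simpa [mul_comm] using this
      calc (μ (C k)).toReal ≤ (μ {ω | (∑ i, X k i ω) ≤ n * α}).toReal := by
            apply ENNReal.toReal_mono (measure_ne_top _ _) (measure_mono hsub2)
        _ ≤ Real.exp (-2 * n * ε ^ 2) :=
            tail_bound μ n (X k) (hXmeas k) (hXbdd k) (hindep k) (R k) α ε
              (hmean k) hε hk.le
    · have : C k = ∅ := by
        ext ω; simp [hC_def, hk]
      simp [this, (Real.exp_pos _).le]
  have hpart1 : (μ s).toReal ≤ (m + 1 : ℝ) * Real.exp (-2 * n * ε ^ 2) := by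
    have h1 : μ s ≤ ∑ k, μ (C k) := by
      calc μ s ≤ μ (⋃ k, C k) := measure_mono hsub
        _ ≤ ∑' k, μ (C k) := measure_iUnion_le _
        _ = ∑ k, μ (C k) := tsum_fintype _
    have h2 : (μ s).toReal ≤ ∑ k, (μ (C k)).toReal := by
      rw [← ENNReal.toReal_sum (fun k _ => measure_ne_top _ _)]
      exact ENNReal.toReal_mono (by
        refine (ENNReal.sum_lt_top.2 fun k _ => measure_lt_top _ _).ne) h1
    calc (μ s).toReal ≤ ∑ k, (μ (C k)).toReal := h2
      _ ≤ ∑ _k : Fin (m + 1), Real.exp (-2 * n * ε ^ 2) :=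
          Finset.sum_le_sum fun k _ => hCk k
      _ = (m + 1 : ℝ) * Real.exp (-2 * n * ε ^ 2) := by
          rw [Finset.sum_const]
          simp [mul_comm]
  refine ⟨hpart1, ?_⟩
  -- expectation bound
  have hmeasRk : Measurable fun ω => R (khat ω) :=
    (measurable_from_top (f := R)).comp hkhatmeas
  have hintL : Integrable (fun ω => R (khat ω)) μ := by
    refine Integrable.mono' (integrable_const 1) hmeasRk.aestronglyMeasurable
      (ae_of_all _ fun ω => ?_)
    rw [Real.norm_eq_abs, abs_of_nonneg (hR _).1]
    exact (hR _).2
  have hintInd : Integrable (s.indicator fun _ => (1:ℝ)) μ :=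
    (integrable_const 1).indicator hs_meas
  have hptwise : ∀ ω, R (khat ω) ≤ (α + ε) + s.indicator (fun _ => (1:ℝ)) ω := by
    intro ω
    by_cases hω : ω ∈ s
    · rw [Set.indicator_of_mem hω]
      have := (hR (khat ω)).2
      have := hα.1
      linarith
    · rw [Set.indicator_of_notMem hω]
      have : ¬ (α + ε < R (khat ω)) := hω
      linarith [not_lt.1 this]
  calc (∫ ω, R (khat ω) ∂μ)
      ≤ ∫ ω, ((α + ε) + s.indicator (fun _ => (1:ℝ)) ω) ∂μ :=
        integral_mono hintL ((integrable_const _).add hintInd) hptwise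
    _ = (α + ε) + (μ s).toReal := by
        rw [integral_add (integrable_const _) hintInd, integral_const,
          integral_indicator_const _ hs_meas]
        simp [measureReal_def]
    _ ≤ α + ε + (m + 1 : ℝ) * Real.exp (-2 * n * ε ^ 2) := by linarith
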